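/- A closed walk is even-visiting if and only if all of its up-crossing counts are even: for a closed walk s of length L, every site x ≠ 0 is visited an even number of times if and only if for every j ∈ ℤ the up-crossing count u(j) is even. -/
import Mathlib


/-- A walk of length `L`: a function `s : Fin (L+1) → ℤ` with `s 0 = 0` and
unit steps `|s (i+1) - s i| = 1` for all `i < L`. -/
def IsWalk (L : ℕ) (s : Fin (L + 1) → ℤ) : Prop :=
  s 0 = 0 ∧ ∀ i : Fin L, |s i.succ - s i.castSucc| = 1

/-- A closed walk: a walk that ends at the origin. -/
def IsClosedWalk (L : ℕ) (s : Fin (L + 1) → ℤ) : Prop :=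
  IsWalk L s ∧ s (Fin.last L) = 0

/-- The number of visits of the walk `s` to the site `x`. -/
def visits (L : ℕ) (s : Fin (L + 1) → ℤ) (x : ℤ) : ℕ :=
  Fintype.card {i : Fin (L + 1) // s i = x}

/-- A walk is even-visiting if every site different from `0` is visited an
even number of times. -/
def EvenVisiting (L : ℕ) (s : Fin (L + 1) → ℤ) : Prop :=
  ∀ x : ℤ, x ≠ 0 → Even (visits L s x)

/-- The up-crossing count `u(j)`: the number of indices `i < L` with
`s i = j` and `s (i+1) = j + 1`. -/
def upcross (L : ℕ) (s : Fin (L + 1) → ℤ) (j : ℤ) : ℕ :=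
  Fintype.card {i : Fin L // s i.castSucc = j ∧ s i.succ = j + 1}

/-- Up-crossing count as a filter cardinality. -/
private def U (L : ℕ) (s : Fin (L + 1) → ℤ) (j : ℤ) : ℕ :=
  (Finset.univ.filter (fun i : Fin L => s i.castSucc = j ∧ s i.succ = j + 1)).card

/-- Down-crossing count of the edge `(j, j+1)`. -/
private def D (L : ℕ) (s : Fin (L + 1) → ℤ) (j : ℤ) : ℕ :=
  (Finset.univ.filter (fun i : Fin L => s i.castSucc = j + 1 ∧ s i.succ = j)).card

private lemma upcross_eq_U (L : ℕ) (s : Fin (L + 1) → ℤ) (j : ℤ) :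
    upcross L s j = U L s j := by
  simp [upcross, U, Fintype.card_subtype]

private lemma walk_abs_le (L : ℕ) (s : Fin (L + 1) → ℤ) (hs : IsWalk L s) :
    ∀ i : Fin (L + 1), |s i| ≤ (i : ℤ) := by
  intro i
  induction i using Fin.induction with
  | zero => simp [hs.1]
  | succ i ih =>
    have h1 := abs_le.mp ih
    have h2 := abs_le.mp (le_of_eq (hs.2 i))
    rw [abs_le]
    simp only [Fin.coe_castSucc] at h1
    simp only [Fin.val_succ]
    push_cast
    omega

private lemma U_eq_zero (L : ℕ) (s : Fin (L + 1) → ℤ) (hs : IsWalk L s) (j : ℤ)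
    (hj : (L : ℤ) < j ∨ j < -(L : ℤ)) : U L s j = 0 := by
  rw [U, Finset.card_eq_zero, Finset.filter_eq_empty_iff]
  rintro i - ⟨h1, -⟩
  have hb := abs_le.mp (walk_abs_le L s hs i.castSucc)
  rw [h1] at hb
  simp only [Fin.coe_castSucc] at hb
  have : (i : ℤ) < L := by exact_mod_cast i.isLt
  omega

private lemma U_eq_D (L : ℕ) (s : Fin (L + 1) → ℤ) (hs : IsClosedWalk L s) (j : ℤ) :
    U L s j = D L s j := by
  have h0 : s 0 = 0 := hs.1.1
  have hL : s (Fin.last L) = 0 := hs.2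
  set f : ℕ → ℤ := fun n => if j < s ⟨min n L, by omega⟩ then 1 else 0 with hf
  have tele : ∑ i ∈ Finset.range L, (f (i + 1) - f i) = f L - f 0 :=
    Finset.sum_range_sub f L
  have hfL0 : f L - f 0 = 0 := by
    have e1 : (⟨min L L, by omega⟩ : Fin (L + 1)) = Fin.last L := by
      ext; simp
    have e2 : (⟨min 0 L, by omega⟩ : Fin (L + 1)) = 0 := by
      ext; simp
    simp only [hf, e1, e2, hL, h0]
    ring
  have key : ∀ i : Fin L,
      ((if s i.castSucc = j ∧ s i.succ = j + 1 then (1 : ℤ) else 0)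
        - (if s i.castSucc = j + 1 ∧ s i.succ = j then (1 : ℤ) else 0))
      = f ((i : ℕ) + 1) - f (i : ℕ) := by
    intro i
    have hstep := hs.1.2 i
    rw [abs_eq (by norm_num : (0:ℤ) ≤ 1)] at hstep
    have e1 : (⟨min ((i : ℕ) + 1) L, by omega⟩ : Fin (L + 1)) = i.succ := by
      ext; simp [Nat.min_eq_left i.isLt]
    have e2 : (⟨min (i : ℕ) L, by omega⟩ : Fin (L + 1)) = i.castSucc := by
      ext; simp [Nat.min_eq_left (le_of_lt i.isLt)]
    simp only [hf, e1, e2]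
    rcases hstep with h | h <;> split_ifs <;> omega
  have main : (U L s j : ℤ) - (D L s j : ℤ) = 0 := by
    have hU : ((U L s j : ℤ)) =
        ∑ i : Fin L, (if s i.castSucc = j ∧ s i.succ = j + 1 then (1 : ℤ) else 0) := by
      rw [Finset.sum_boole, U]
    have hD : ((D L s j : ℤ)) =
        ∑ i : Fin L, (if s i.castSucc = j + 1 ∧ s i.succ = j then (1 : ℤ) else 0) := by
      rw [Finset.sum_boole, D]
    rw [hU, hD, ← Finset.sum_sub_distrib, Finset.sum_congr rfl (fun i _ => key i),
      Fin.sum_univ_eq_sum_range (fun n => f (n + 1) - f n) L, tele, hfL0]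
  omega

private lemma visits_eq (L : ℕ) (s : Fin (L + 1) → ℤ) (hs : IsClosedWalk L s)
    (x : ℤ) (hx : x ≠ 0) :
    visits L s x = U L s x + U L s (x - 1) := by
  have hD' : U L s (x - 1) =
      (Finset.univ.filter (fun i : Fin L => s i.castSucc = x ∧ s i.succ = x - 1)).card := by
    rw [U_eq_D L s hs (x - 1), D]
    congr 1
    ext i
    simp only [Finset.mem_filter]
    constructor <;> rintro ⟨hm, h1, h2⟩ <;> exact ⟨hm, by omega, h2⟩
  rw [hD']
  have h1 : visits L s x = (Finset.univ.filter (fun i : Fin (L + 1) => s i = x)).card := by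
    simp [visits, Fintype.card_subtype]
  have h2 : (Finset.univ.filter (fun i : Fin L => s i.castSucc = x)).card
      = (Finset.univ.filter (fun i : Fin (L + 1) => s i = x)).card := by
    apply Finset.card_bij (fun (i : Fin L) _ => i.castSucc)
    · intro a ha
      simp only [Finset.mem_filter, Finset.mem_univ, true_and] at ha ⊢
      exact ha
    · intro a _ b _ h
      exact Fin.castSucc_injective L h
    · intro b hb
      simp only [Finset.mem_filter, Finset.mem_univ, true_and] at hb
      have hbl : b ≠ Fin.last L := by
        intro h
        rw [h, hs.2] at hb
        exact hx hb.symm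
      refine ⟨b.castPred hbl, ?_, Fin.castSucc_castPred b hbl⟩
      simp only [Finset.mem_filter, Finset.mem_univ, true_and, Fin.castSucc_castPred]
      exact hb
  have h3 := Finset.card_filter_add_card_filter_not
    (s := Finset.univ.filter (fun i : Fin L => s i.castSucc = x))
    (p := fun i : Fin L => s i.succ = x + 1)
  rw [Finset.filter_filter, Finset.filter_filter] at h3
  have h4 : Finset.univ.filter (fun i : Fin L => s i.castSucc = x ∧ ¬ s i.succ = x + 1)
      = Finset.univ.filter (fun i : Fin L => s i.castSucc = x ∧ s i.succ = x - 1) := by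
    ext i
    simp only [Finset.mem_filter, Finset.mem_univ, true_and]
    have hstep := hs.1.2 i
    rw [abs_eq (by norm_num : (0:ℤ) ≤ 1)] at hstep
    constructor <;> rintro ⟨ha, hb⟩ <;> exact ⟨ha, by omega⟩
  rw [h4] at h3
  rw [h1, ← h2, ← h3, U]

/-- A closed walk is even-visiting iff all of its up-crossing counts are even. -/
theorem even_visiting_iff_upcross_even (L : ℕ) (s : Fin (L + 1) → ℤ)
    (hs : IsClosedWalk L s) :
    EvenVisiting L s ↔ ∀ j : ℤ, Even (upcross L s j) := by
  simp only [EvenVisiting, upcross_eq_U]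
  constructor
  · intro hEV j
    have hpar : ∀ x : ℤ, x ≠ 0 → (Even (U L s x) ↔ Even (U L s (x - 1))) := by
      intro x hx
      have := hEV x hx
      rw [visits_eq L s hs x hx, Nat.even_add] at this
      exact this
    have claimU : ∀ n : ℕ, ∀ j : ℤ, 0 ≤ j → (L : ℤ) + 1 ≤ j + n → Even (U L s j) := by
      intro n
      induction n with
      | zero =>
        intro j hj hjn
        rw [U_eq_zero L s hs.1 j (by left; omega)]
        exact Even.zero
      | succ n ih =>
        intro j hj hjn
        by_cases h : (L : ℤ) + 1 ≤ j + n
        · exact ih j hj h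
        · have hx : j + 1 ≠ 0 := by omega
          have hiff := hpar (j + 1) hx
          have hj1 : Even (U L s (j + 1)) := ih (j + 1) (by omega) (by push_cast at hjn ⊢; omega)
          have e : j + 1 - 1 = j := by ring
          rw [e] at hiff
          exact hiff.mp hj1
    have claimD : ∀ n : ℕ, ∀ j : ℤ, j ≤ -1 → j ≤ -(L : ℤ) - 1 + n → Even (U L s j) := by
      intro n
      induction n with
      | zero =>
        intro j hj hjn
        rw [U_eq_zero L s hs.1 j (by right; omega)]
        exact Even.zero
      | succ n ih =>
        intro j hj hjn
        by_cases h : j ≤ -(L : ℤ) - 1 + n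
        · exact ih j hj h
        · have hx : j ≠ 0 := by omega
          have hj1 : Even (U L s (j - 1)) := ih (j - 1) (by omega) (by push_cast at hjn ⊢; omega)
          exact (hpar j hx).mpr hj1
    rcases le_or_gt 0 j with hj | hj
    · exact claimU (L + 1) j hj (by push_cast; omega)
    · exact claimD (L + 1) j (by omega) (by push_cast; omega)
  · intro hU x hx
    rw [visits_eq L s hs x hx]
    exact (hU x).add (hU (x - 1))
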